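/- arXiv:2303.01997 — 2 statements merged into one kernel-verified Lean document; each statement's English description precedes it below -/
import Mathlib

section
/- Let H be a connected dominating graph with bipartition A ∪ B, where |A| ≤ |B|, and let Δ be the maximum degree of H. Then every vertex of A has degree Δ in H; in particular e(H) = Δ·|A|. -/
open MeasureTheory
open scoped Classical

noncomputable section

/-- A graphon: a symmetric measurable function `[0,1]² → [0,1]` (extended to `ℝ²`). -/
structure Graphon where
  toFun : ℝ → ℝ → ℝ
  symm : ∀ x y, toFun x y = toFun y x
  measurable' : Measurable (Function.uncurry toFun)
  nonneg : ∀ x y, 0 ≤ toFun x y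
  le_one : ∀ x y, toFun x y ≤ 1

/-- The number of edges of a finite simple graph. -/
def SimpleGraph.edgeCard {V : Type} [Fintype V] (H : SimpleGraph V) : ℕ :=
  H.edgeSet.toFinset.card

/-- The homomorphism density `t_H(W)` of a graph `H` in a graphon `W`. -/
def homDensity {V : Type} [Fintype V] (H : SimpleGraph V) (W : Graphon) : ℝ :=
  ∫ x in (Set.univ.pi fun _ : V => Set.Icc (0:ℝ) 1),
    ∏ e ∈ H.edgeSet.toFinset,
      Sym2.lift ⟨fun i j => W.toFun (x i) (x j), fun i j => W.symm (x i) (x j)⟩ e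

/-- The homomorphism density of an edge subset `J` (of a graph on vertex set `V`). -/
def subDensity {V : Type} [Fintype V] (J : Finset (Sym2 V)) (W : Graphon) : ℝ :=
  ∫ x in (Set.univ.pi fun _ : V => Set.Icc (0:ℝ) 1),
    ∏ e ∈ J,
      Sym2.lift ⟨fun i j => W.toFun (x i) (x j), fun i j => W.symm (x i) (x j)⟩ e

/-- `H` dominates `H'`: `t_H(W)^{1/e(H)} ≥ t_{H'}(W)^{1/e(H')}` for every graphon `W`. -/
def Dominates {V V' : Type} [Fintype V] [Fintype V']
    (H : SimpleGraph V) (H' : SimpleGraph V') : Prop :=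
  ∀ W : Graphon,
    homDensity H' W ^ ((1 : ℝ) / H'.edgeCard) ≤ homDensity H W ^ ((1 : ℝ) / H.edgeCard)

/-- `H'` is (isomorphic to) a subgraph of `H`. -/
def IsSubgraphOf {V V' : Type} (H' : SimpleGraph V') (H : SimpleGraph V) : Prop :=
  ∃ f : H' →g H, Function.Injective f

/-- `H` is dominating: it dominates all of its subgraphs with at least one edge. -/
def IsDominating {V : Type} [Fintype V] (H : SimpleGraph V) : Prop :=
  ∀ (V' : Type) [Fintype V'] (H' : SimpleGraph V'),
    IsSubgraphOf H' H → 1 ≤ H'.edgeCard → Dominates H H'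

/-- The disjoint union of `r` copies of `H`. -/
def nCopies {V : Type} (H : SimpleGraph V) (r : ℕ) : SimpleGraph (V × Fin r) where
  Adj a b := a.2 = b.2 ∧ H.Adj a.1 b.1
  symm := ⟨fun a b h => ⟨h.1.symm, h.2.symm⟩⟩
  loopless := ⟨fun a h => H.irrefl h.2⟩

/-- The disjoint union of two graphs. -/
def disjUnion {V₁ V₂ : Type} (H₁ : SimpleGraph V₁) (H₂ : SimpleGraph V₂) :
    SimpleGraph (V₁ ⊕ V₂) where
  Adj a b := match a, b with
    | .inl a, .inl b => H₁.Adj a b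
    | .inr a, .inr b => H₂.Adj a b
    | _, _ => False
  symm := ⟨by rintro (a|a) (b|b) h <;> simp_all <;> exact h.symm⟩
  loopless := ⟨by rintro (a|a) h <;> exact (SimpleGraph.irrefl _) h⟩

/-- A cut involution of `H`: an involutive automorphism whose fixed set is a vertex
cut separating `L` and `R`, which are swapped by the involution, with no edges
between `L` and `R`. -/
structure CutInvolution {V : Type} (H : SimpleGraph V) where
  toEquiv : V ≃ V
  adj_iff : ∀ v w, H.Adj (toEquiv v) (toEquiv w) ↔ H.Adj v w
  invol : ∀ v, toEquiv (toEquiv v) = v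
  L : Set V
  R : Set V
  disj : Disjoint L R
  cover : ∀ v, toEquiv v ≠ v → v ∈ L ∨ v ∈ R
  not_fixed : ∀ v ∈ L ∪ R, toEquiv v ≠ v
  maps : ∀ v ∈ L, toEquiv v ∈ R
  no_edge : ∀ v ∈ L, ∀ w ∈ R, ¬ H.Adj v w
  L_nonempty : L.Nonempty
  R_nonempty : R.Nonempty

/-- The left-folding map `φ⁺` of a cut involution. -/
def CutInvolution.plusMap {V : Type} {H : SimpleGraph V} (c : CutInvolution H) : V → V :=
  fun v => if v ∈ c.R then c.toEquiv v else v

/-- The right-folding map `φ⁻` of a cut involution. -/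
def CutInvolution.minusMap {V : Type} {H : SimpleGraph V} (c : CutInvolution H) : V → V :=
  fun v => if v ∈ c.L then c.toEquiv v else v

/-- `J(ψ) = {e ∈ E(H) : ψ(e) ∈ J}` for a (half-folding) map `ψ` on vertices. -/
def foldSet {V : Type} [Fintype V] (H : SimpleGraph V) (J : Finset (Sym2 V)) (ψ : V → V) :
    Finset (Sym2 V) :=
  H.edgeSet.toFinset.filter (fun e => Sym2.map ψ e ∈ J)

/-- The number of homomorphisms from `H` to `G`. -/
def homCount {V U : Type} [Fintype V] [Fintype U]
    (H : SimpleGraph V) (G : SimpleGraph U) : ℕ :=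
  Nat.card (H →g G)

/-- The homomorphism density `t_H(G)` for finite graphs. -/
def homDensityG {V U : Type} [Fintype V] [Fintype U]
    (H : SimpleGraph V) (G : SimpleGraph U) : ℝ :=
  (homCount H G : ℝ) / (Fintype.card U : ℝ) ^ (Fintype.card V)

/-- The tensor (categorical) product of two graphs. -/
def tensorProd {V U : Type} (H : SimpleGraph V) (K : SimpleGraph U) :
    SimpleGraph (V × U) where
  Adj a b := H.Adj a.1 b.1 ∧ K.Adj a.2 b.2
  symm := ⟨fun a b h => ⟨h.1.symm, h.2.symm⟩⟩
  loopless := ⟨fun a h => H.irrefl h.1⟩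

/-- The auxiliary graph `G*` on ordered `m`-tuples of vertices of `G`, with `a ~ a'`
iff every coordinate of `a` is adjacent in `G` to every coordinate of `a'`. -/
def auxPower {U : Type} (G : SimpleGraph U) (m : ℕ) (hm : 1 ≤ m) :
    SimpleGraph (Fin m → U) where
  Adj a b := ∀ i j, G.Adj (a i) (b j)
  symm := ⟨fun a b h i j => (h j i).symm⟩
  loopless := ⟨fun a h => G.irrefl (h ⟨0, hm⟩ ⟨0, hm⟩)⟩

/-- The graph `C₆⁺`: a 6-cycle on vertices `0,…,5` together with a central vertex `6`
joined to the alternating vertices `0, 2, 4`. -/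
def C6plus : SimpleGraph (Fin 7) := SimpleGraph.fromRel (fun a b =>
  (a.1 < 6 ∧ b.1 < 6 ∧ b.1 % 6 = (a.1 + 1) % 6) ∨ (a = 6 ∧ (b = 0 ∨ b = 2 ∨ b = 4)))

end

-- AUX START
noncomputable section Aux

open MeasureTheory Finset

variable {V : Type} [Fintype V]

/-- The corner graphon: `W(x,y) = 1` iff `min(x,y) ≤ δ`. -/
def cornerG (δ : ℝ) : Graphon where
  toFun x y := if x ≤ δ ∨ y ≤ δ then 1 else 0
  symm x y := by exact if_congr or_comm rfl rfl
  measurable' := by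
    have : Measurable fun p : ℝ × ℝ => if p.1 ≤ δ ∨ p.2 ≤ δ then (1:ℝ) else 0 :=
      Measurable.ite ((measurableSet_le measurable_fst measurable_const).union
        (measurableSet_le measurable_snd measurable_const)) measurable_const measurable_const
    exact this
  nonneg x y := by split <;> norm_num
  le_one x y := by split <;> norm_num

/-- The domain `[0,1]^V`. -/
def Dom (V : Type) : Set (V → ℝ) := Set.univ.pi fun _ : V => Set.Icc (0:ℝ) 1

lemma measurableSet_Dom : MeasurableSet (Dom V) :=
  MeasurableSet.univ_pi fun _ => measurableSet_Icc

lemma isProb_Dom : IsProbabilityMeasure ((volume : Measure (V → ℝ)).restrict (Dom V)) := by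
  constructor
  rw [Measure.restrict_apply_univ, Dom, volume_pi, Measure.pi_pi]
  simp [Real.volume_Icc]

/-- The integrand of `homDensity`. -/
def edgeProd (W : Graphon) (J : Finset (Sym2 V)) (x : V → ℝ) : ℝ :=
  ∏ e ∈ J, Sym2.lift ⟨fun i j => W.toFun (x i) (x j), fun i j => W.symm (x i) (x j)⟩ e

lemma homDensity_eq (H : SimpleGraph V) (W : Graphon) :
    homDensity H W = ∫ x in Dom V, edgeProd W H.edgeSet.toFinset x := rfl

lemma lift_nonneg (W : Graphon) (x : V → ℝ) (e : Sym2 V) :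
    0 ≤ Sym2.lift ⟨fun i j => W.toFun (x i) (x j), fun i j => W.symm (x i) (x j)⟩ e := by
  induction e using Sym2.ind with
  | _ a b => simpa using W.nonneg (x a) (x b)

lemma lift_le_one (W : Graphon) (x : V → ℝ) (e : Sym2 V) :
    Sym2.lift ⟨fun i j => W.toFun (x i) (x j), fun i j => W.symm (x i) (x j)⟩ e ≤ 1 := by
  induction e using Sym2.ind with
  | _ a b => simpa using W.le_one (x a) (x b)

lemma lift_measurable (W : Graphon) (e : Sym2 V) :
    Measurable fun x : V → ℝ =>
      Sym2.lift ⟨fun i j => W.toFun (x i) (x j), fun i j => W.symm (x i) (x j)⟩ e := by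
  induction e using Sym2.ind with
  | _ a b =>
    simp only [Sym2.lift_mk]
    have : Measurable fun x : V → ℝ => Function.uncurry W.toFun (x a, x b) :=
      W.measurable'.comp ((measurable_pi_apply a).prodMk (measurable_pi_apply b))
    exact this

lemma edgeProd_nonneg (W : Graphon) (J : Finset (Sym2 V)) (x : V → ℝ) :
    0 ≤ edgeProd W J x :=
  Finset.prod_nonneg fun e _ => lift_nonneg W x e

lemma edgeProd_le_one (W : Graphon) (J : Finset (Sym2 V)) (x : V → ℝ) :
    edgeProd W J x ≤ 1 :=
  Finset.prod_le_one (fun e _ => lift_nonneg W x e) (fun e _ => lift_le_one W x e)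

lemma edgeProd_measurable (W : Graphon) (J : Finset (Sym2 V)) :
    Measurable (edgeProd W J) :=
  Finset.measurable_prod _ fun e _ => lift_measurable W e

lemma integrable_edgeProd (W : Graphon) (J : Finset (Sym2 V)) :
    Integrable (edgeProd W J) ((volume : Measure (V → ℝ)).restrict (Dom V)) := by
  haveI := isProb_Dom (V := V)
  refine (integrable_const (1:ℝ)).mono'
    (edgeProd_measurable W J).aestronglyMeasurable (ae_of_all _ fun x => ?_)
  rw [Real.norm_eq_abs, abs_of_nonneg (edgeProd_nonneg W J x)]
  exact edgeProd_le_one W J x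

lemma homDensity_nonneg (H : SimpleGraph V) (W : Graphon) : 0 ≤ homDensity H W := by
  rw [homDensity_eq]
  exact setIntegral_nonneg measurableSet_Dom fun x _ => edgeProd_nonneg W _ x

/-- The box `{x | x_v ≤ δ for v ∈ S}`. -/
def indSet (S : Finset V) (δ : ℝ) : Set (V → ℝ) :=
  Set.univ.pi fun v => if v ∈ S then Set.Iic δ else Set.univ

lemma measurableSet_indSet (S : Finset V) (δ : ℝ) : MeasurableSet (indSet S δ) :=
  MeasurableSet.univ_pi fun v => by
    split
    · exact measurableSet_Iic
    · exact MeasurableSet.univ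

lemma integrable_indSet (S : Finset V) (δ : ℝ) :
    Integrable ((indSet S δ).indicator (1 : (V → ℝ) → ℝ))
      ((volume : Measure (V → ℝ)).restrict (Dom V)) := by
  haveI := isProb_Dom (V := V)
  exact (integrable_const (1:ℝ)).indicator (measurableSet_indSet S δ)

lemma integral_indSet (S : Finset V) {δ : ℝ} (h0 : 0 ≤ δ) (h1 : δ ≤ 1) :
    ∫ x in Dom V, (indSet S δ).indicator 1 x = δ ^ S.card := by
  rw [integral_indicator_one (measurableSet_indSet S δ), measureReal_def,
    Measure.restrict_apply (measurableSet_indSet S δ)]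
  have hins : indSet S δ ∩ Dom V =
      Set.univ.pi fun v => if v ∈ S then Set.Icc 0 δ else Set.Icc 0 1 := by
    rw [indSet, Dom, ← Set.pi_inter_distrib]
    apply Set.pi_congr rfl
    intro v _
    split
    · ext t
      simp only [Set.mem_inter_iff, Set.mem_Iic, Set.mem_Icc]
      constructor
      · rintro ⟨h, h2, _⟩; exact ⟨h2, h⟩
      · rintro ⟨h2, h⟩; exact ⟨h, h2, h.trans h1⟩
    · simp
  rw [hins, volume_pi, Measure.pi_pi]
  have hv : ∀ v : V,
      volume (if v ∈ S then Set.Icc (0:ℝ) δ else Set.Icc (0:ℝ) 1)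
        = if v ∈ S then ENNReal.ofReal δ else 1 := by
    intro v; split <;> simp [Real.volume_Icc]
  rw [Finset.prod_congr rfl fun v _ => hv v, Finset.prod_ite_mem, Finset.univ_inter,
    Finset.prod_const, ENNReal.toReal_pow, ENNReal.toReal_ofReal h0]

end Aux

noncomputable section Aux2

open MeasureTheory Finset

variable {V : Type} [Fintype V]

/-- A vertex cover (as a Finset). -/
def IsCover (H : SimpleGraph V) (T : Finset V) : Prop :=
  ∀ ⦃a b⦄, H.Adj a b → a ∈ T ∨ b ∈ T

lemma lift_corner_eq_one {δ : ℝ} {x : V → ℝ} {e : Sym2 V} (h : ∃ a ∈ e, x a ≤ δ) :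
    Sym2.lift ⟨fun i j => (cornerG δ).toFun (x i) (x j),
      fun i j => (cornerG δ).symm (x i) (x j)⟩ e = 1 := by
  induction e using Sym2.ind with
  | _ a b =>
    obtain ⟨c, hc, hcd⟩ := h
    rw [Sym2.mem_iff] at hc
    simp only [Sym2.lift_mk]
    show (if x a ≤ δ ∨ x b ≤ δ then (1:ℝ) else 0) = 1
    rw [if_pos]
    rcases hc with rfl | rfl
    · exact Or.inl hcd
    · exact Or.inr hcd

lemma lift_corner_eq_zero {δ : ℝ} {x : V → ℝ} {e : Sym2 V} (h : ∀ a ∈ e, δ < x a) :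
    Sym2.lift ⟨fun i j => (cornerG δ).toFun (x i) (x j),
      fun i j => (cornerG δ).symm (x i) (x j)⟩ e = 0 := by
  induction e using Sym2.ind with
  | _ a b =>
    simp only [Sym2.lift_mk]
    show (if x a ≤ δ ∨ x b ≤ δ then (1:ℝ) else 0) = 0
    rw [if_neg]
    rintro (hc | hc)
    · exact absurd hc (not_le.mpr (h a (Sym2.mem_mk_left a b)))
    · exact absurd hc (not_le.mpr (h b (Sym2.mem_mk_right a b)))

lemma le_homDensity_corner (H : SimpleGraph V) (C : Finset V) (hC : IsCover H C)
    {δ : ℝ} (h0 : 0 ≤ δ) (h1 : δ ≤ 1) :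
    δ ^ C.card ≤ homDensity H (cornerG δ) := by
  rw [homDensity_eq, ← integral_indSet C h0 h1]
  refine integral_mono_of_nonneg
    (ae_of_all _ fun x => Set.indicator_nonneg (fun _ _ => by norm_num) x)
    (integrable_edgeProd _ _) (ae_of_all _ fun x => ?_)
  by_cases hx : x ∈ indSet C δ
  · have hxC : ∀ v ∈ C, x v ≤ δ := by
      intro v hv
      have := (Set.mem_univ_pi.mp hx) v
      rwa [if_pos hv] at this
    have hone : edgeProd (cornerG δ) H.edgeSet.toFinset x = 1 := by
      apply Finset.prod_eq_one
      intro e he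
      apply lift_corner_eq_one
      rw [Set.mem_toFinset] at he
      induction e using Sym2.ind with
      | _ a b =>
        rw [SimpleGraph.mem_edgeSet] at he
        rcases hC he with hmem | hmem
        · exact ⟨a, Sym2.mem_mk_left a b, hxC a hmem⟩
        · exact ⟨b, Sym2.mem_mk_right a b, hxC b hmem⟩
    rw [Set.indicator_of_mem hx, hone, Pi.one_apply]
  · rw [Set.indicator_of_notMem hx]
    exact edgeProd_nonneg _ _ x

lemma homDensity_corner_le (H : SimpleGraph V) (τ : ℕ)
    (hτ : ∀ T : Finset V, IsCover H T → τ ≤ T.card)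
    {δ : ℝ} (h0 : 0 ≤ δ) (h1 : δ ≤ 1) :
    homDensity H (cornerG δ) ≤ 2 ^ (Fintype.card V) * δ ^ τ := by
  set covers : Finset (Finset V) := Finset.univ.filter (fun T => IsCover H T) with hcovdef
  have step1 : homDensity H (cornerG δ) ≤
      ∑ T ∈ covers, ∫ x in Dom V, (indSet T δ).indicator 1 x := by
    rw [homDensity_eq, ← integral_finset_sum _ (fun T _ => integrable_indSet T δ)]
    refine integral_mono_of_nonneg (ae_of_all _ fun x => edgeProd_nonneg _ _ x)
      (integrable_finset_sum _ (fun T _ => integrable_indSet T δ)) (ae_of_all _ fun x => ?_)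
    show edgeProd (cornerG δ) H.edgeSet.toFinset x ≤ ∑ T ∈ covers, (indSet T δ).indicator 1 x
    by_cases hall : ∀ e ∈ H.edgeSet.toFinset, ∃ a ∈ e, x a ≤ δ
    · set T0 : Finset V := Finset.univ.filter (fun v => x v ≤ δ) with hT0
      have hcov : IsCover H T0 := by
        intro a b hab
        obtain ⟨c, hc, hcd⟩ := hall s(a,b)
          (by rw [Set.mem_toFinset, SimpleGraph.mem_edgeSet]; exact hab)
        rw [Sym2.mem_iff] at hc
        rcases hc with rfl | rfl
        · exact Or.inl (Finset.mem_filter.mpr ⟨Finset.mem_univ _, hcd⟩)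
        · exact Or.inr (Finset.mem_filter.mpr ⟨Finset.mem_univ _, hcd⟩)
      have hxT0 : x ∈ indSet T0 δ := by
        rw [indSet, Set.mem_univ_pi]
        intro v
        split
        · next h => exact (Finset.mem_filter.mp h).2
        · trivial
      calc edgeProd (cornerG δ) H.edgeSet.toFinset x ≤ 1 := edgeProd_le_one _ _ x
        _ = (indSet T0 δ).indicator 1 x := by rw [Set.indicator_of_mem hxT0, Pi.one_apply]
        _ ≤ ∑ T ∈ covers, (indSet T δ).indicator 1 x :=
            Finset.single_le_sum (f := fun T => (indSet T δ).indicator 1 x) (fun T _ => Set.indicator_nonneg (fun _ _ => by norm_num) x)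
              (Finset.mem_filter.mpr ⟨Finset.mem_univ _, hcov⟩)
    · push_neg at hall
      obtain ⟨e, he, hbad⟩ := hall
      have hz : edgeProd (cornerG δ) H.edgeSet.toFinset x = 0 :=
        Finset.prod_eq_zero he (lift_corner_eq_zero hbad)
      rw [hz]
      exact Finset.sum_nonneg fun T _ => Set.indicator_nonneg (fun _ _ => by norm_num) x
  have hcard : ((covers.card : ℝ)) ≤ 2 ^ (Fintype.card V) := by
    have h2 : covers.card ≤ 2 ^ (Fintype.card V) := by
      simpa [Fintype.card_finset] using Finset.card_le_univ covers
    exact_mod_cast h2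
  calc homDensity H (cornerG δ)
      ≤ ∑ T ∈ covers, ∫ x in Dom V, (indSet T δ).indicator 1 x := step1
    _ = ∑ T ∈ covers, δ ^ T.card :=
        Finset.sum_congr rfl fun T _ => integral_indSet T h0 h1
    _ ≤ ∑ T ∈ covers, δ ^ τ :=
        Finset.sum_le_sum fun T hT =>
          pow_le_pow_of_le_one h0 h1 (hτ T (Finset.mem_filter.mp hT).2)
    _ = (covers.card : ℝ) * δ ^ τ := by rw [Finset.sum_const, nsmul_eq_mul]
    _ ≤ 2 ^ (Fintype.card V) * δ ^ τ :=
        mul_le_mul_of_nonneg_right hcard (pow_nonneg h0 τ)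

end Aux2

noncomputable section Aux3

open Finset

variable {V : Type} [Fintype V]

lemma degree_eq_card_filter (H : SimpleGraph V) (v : V) :
    H.degree v = (H.edgeSet.toFinset.filter (fun e => v ∈ e)).card := by
  classical
  rw [← SimpleGraph.card_incidenceFinset_eq_degree]
  congr 1
  ext e
  simp [SimpleGraph.mem_incidenceFinset, SimpleGraph.incidenceSet, Set.mem_toFinset]

lemma sum_degree_eq_sum_card (H : SimpleGraph V) (T : Finset V) :
    ∑ v ∈ T, H.degree v
      = ∑ e ∈ H.edgeSet.toFinset, (T.filter (fun v => v ∈ e)).card := by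
  have h1 : ∀ v ∈ T, H.degree v = ∑ e ∈ H.edgeSet.toFinset, if v ∈ e then 1 else 0 := by
    intro v _
    rw [degree_eq_card_filter, Finset.card_filter]
  rw [Finset.sum_congr rfl h1, Finset.sum_comm]
  exact Finset.sum_congr rfl fun e _ => (Finset.card_filter _ _).symm

lemma one_le_card_filter_of_cover {H : SimpleGraph V} {T : Finset V} (hT : IsCover H T)
    {e : Sym2 V} (he : e ∈ H.edgeSet.toFinset) :
    1 ≤ (T.filter (fun v => v ∈ e)).card := by
  induction e using Sym2.ind with
  | _ a b =>
    rw [Set.mem_toFinset, SimpleGraph.mem_edgeSet] at he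
    rcases hT he with h | h
    · exact Finset.card_pos.mpr ⟨a, Finset.mem_filter.mpr ⟨h, Sym2.mem_mk_left a b⟩⟩
    · exact Finset.card_pos.mpr ⟨b, Finset.mem_filter.mpr ⟨h, Sym2.mem_mk_right a b⟩⟩

lemma edgeCard_le_sum_degree (H : SimpleGraph V) (T : Finset V) (hT : IsCover H T) :
    H.edgeCard ≤ ∑ v ∈ T, H.degree v := by
  rw [sum_degree_eq_sum_card, SimpleGraph.edgeCard, Finset.card_eq_sum_ones]
  exact Finset.sum_le_sum fun e he => one_le_card_filter_of_cover hT he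

lemma sum_degree_le (H : SimpleGraph V) (T : Finset V) :
    ∑ v ∈ T, H.degree v ≤ H.maxDegree * T.card := by
  calc ∑ v ∈ T, H.degree v ≤ ∑ _v ∈ T, H.maxDegree :=
        Finset.sum_le_sum fun v _ => H.degree_le_maxDegree v
    _ = H.maxDegree * T.card := by rw [Finset.sum_const, smul_eq_mul, mul_comm]

lemma forall_eq_one_of_sum {α : Type} {s : Finset α} {f : α → ℕ}
    (h1 : ∀ i ∈ s, 1 ≤ f i) (h2 : ∑ i ∈ s, f i ≤ s.card) : ∀ i ∈ s, f i = 1 := by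
  by_contra hc
  push_neg at hc
  obtain ⟨i, hi, hne⟩ := hc
  have hlt : ∑ _i ∈ s, 1 < ∑ i ∈ s, f i :=
    Finset.sum_lt_sum h1 ⟨i, hi, lt_of_le_of_ne (h1 i hi) (Ne.symm hne)⟩
  rw [Finset.sum_const, smul_eq_mul, mul_one] at hlt
  omega

lemma forall_eq_of_sum_max {α : Type} {s : Finset α} {f : α → ℕ} {m : ℕ}
    (h1 : ∀ i ∈ s, f i ≤ m) (h2 : m * s.card ≤ ∑ i ∈ s, f i) : ∀ i ∈ s, f i = m := by
  by_contra hc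
  push_neg at hc
  obtain ⟨i, hi, hne⟩ := hc
  have hlt : ∑ i ∈ s, f i < ∑ _i ∈ s, m :=
    Finset.sum_lt_sum h1 ⟨i, hi, lt_of_le_of_ne (h1 i hi) hne⟩
  rw [Finset.sum_const, smul_eq_mul, mul_comm] at hlt
  omega

lemma iff_of_connected {H : SimpleGraph V} (hc : H.Connected) (P : V → Prop)
    (hP : ∀ v w, H.Adj v w → (P v ↔ P w)) (u w : V) : P u ↔ P w := by
  obtain ⟨p⟩ := hc.preconnected u w
  induction p with
  | nil => exact Iff.rfl
  | cons h _ ih => exact (hP _ _ h).trans ih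

/-- The star subgraph at a vertex `v`: all edges of `H` incident to `v`. -/
def starAt (H : SimpleGraph V) (v : V) : SimpleGraph V where
  Adj a b := H.Adj a b ∧ (a = v ∨ b = v)
  symm := ⟨fun a b h => ⟨h.1.symm, h.2.symm⟩⟩
  loopless := ⟨fun a h => H.irrefl h.1⟩

lemma starAt_edgeSet_toFinset (H : SimpleGraph V) (v : V) :
    (starAt H v).edgeSet.toFinset = H.edgeSet.toFinset.filter (fun e => v ∈ e) := by
  ext e
  induction e using Sym2.ind with
  | _ a b =>
    simp only [Set.mem_toFinset, SimpleGraph.mem_edgeSet, Finset.mem_filter, Sym2.mem_iff]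
    show H.Adj a b ∧ (a = v ∨ b = v) ↔ H.Adj a b ∧ (v = a ∨ v = b)
    constructor
    · rintro ⟨h, rfl | rfl⟩
      · exact ⟨h, Or.inl rfl⟩
      · exact ⟨h, Or.inr rfl⟩
    · rintro ⟨h, rfl | rfl⟩
      · exact ⟨h, Or.inl rfl⟩
      · exact ⟨h, Or.inr rfl⟩

lemma starAt_edgeCard (H : SimpleGraph V) (v : V) :
    (starAt H v).edgeCard = H.degree v := by
  rw [SimpleGraph.edgeCard, starAt_edgeSet_toFinset, ← degree_eq_card_filter]

lemma starAt_isSubgraph (H : SimpleGraph V) (v : V) : IsSubgraphOf (starAt H v) H :=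
  ⟨⟨id, fun h => h.1⟩, fun _ _ h => h⟩

lemma starAt_cover (H : SimpleGraph V) (v : V) : IsCover (starAt H v) {v} := by
  intro a b h
  rcases h.2 with rfl | rfl
  · exact Or.inl (Finset.mem_singleton_self _)
  · exact Or.inr (Finset.mem_singleton_self _)

lemma maxDegree_mul_le_edgeCard (H : SimpleGraph V) (hdom : IsDominating H)
    (hne : Nonempty V) (hΔ : 1 ≤ H.maxDegree) (C : Finset V) (hCmin : ∀ T : Finset V, IsCover H T → C.card ≤ T.card) :
    H.maxDegree * C.card ≤ H.edgeCard := by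
  classical
  haveI := hne
  obtain ⟨v, hv⟩ := H.exists_maximal_degree_vertex
  have hdv : H.degree v = H.maxDegree := hv.symm
  have hm1 : 1 ≤ H.edgeCard := by
    have h1 : 0 < H.degree v := by omega
    obtain ⟨w, hw⟩ := Finset.card_pos.mp h1
    have hadj : H.Adj v w := (SimpleGraph.mem_neighborFinset H v w).mp hw
    have : s(v, w) ∈ H.edgeSet.toFinset := Set.mem_toFinset.mpr hadj
    exact Finset.card_pos.mpr ⟨_, this⟩
  set n := Fintype.card V with hn
  set Δ := H.maxDegree with hΔdef
  set m := H.edgeCard with hm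
  by_contra hlt
  push_neg at hlt
  set δ : ℝ := ((2:ℝ) ^ (n * Δ) + 1)⁻¹ with hδdef
  have h2pos : (0:ℝ) < 2 ^ (n * Δ) := by positivity
  have hδpos : 0 < δ := by positivity
  have hδ1 : δ ≤ 1 := by
    rw [hδdef]
    exact inv_le_one_of_one_le₀ (by linarith)
  have hstar := hdom V (starAt H v) (starAt_isSubgraph H v)
    (by rw [starAt_edgeCard, hdv]; exact hΔ) (cornerG δ)
  rw [starAt_edgeCard, hdv] at hstar
  have hlow : δ ≤ homDensity (starAt H v) (cornerG δ) := by
    have := le_homDensity_corner (starAt H v) {v} (starAt_cover H v) hδpos.le hδ1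
    simpa using this
  have hupp : homDensity H (cornerG δ) ≤ 2 ^ n * δ ^ C.card :=
    homDensity_corner_le H C.card hCmin hδpos.le hδ1
  have hX : (0:ℝ) ≤ 2 ^ n * δ ^ C.card := by positivity
  have hA : δ ^ ((1:ℝ)/Δ) ≤ (2 ^ n * δ ^ C.card) ^ ((1:ℝ)/m) := by
    calc δ ^ ((1:ℝ)/Δ) ≤ (homDensity (starAt H v) (cornerG δ)) ^ ((1:ℝ)/Δ) :=
          Real.rpow_le_rpow hδpos.le hlow (by positivity)
      _ ≤ (homDensity H (cornerG δ)) ^ ((1:ℝ)/m) := hstar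
      _ ≤ (2 ^ n * δ ^ C.card) ^ ((1:ℝ)/m) :=
          Real.rpow_le_rpow (homDensity_nonneg _ _) hupp (by positivity)
  have hΔ0 : (Δ:ℝ) ≠ 0 := Nat.cast_ne_zero.mpr (by omega)
  have hm0 : (m:ℝ) ≠ 0 := Nat.cast_ne_zero.mpr (by omega)
  have hB : δ ^ ((m:ℕ):ℝ) ≤ (2 ^ n * δ ^ C.card) ^ ((Δ:ℕ):ℝ) := by
    have h2 := Real.rpow_le_rpow (Real.rpow_nonneg hδpos.le _) hA
      (show (0:ℝ) ≤ (Δ:ℝ) * (m:ℝ) by positivity)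
    rw [← Real.rpow_mul hδpos.le, ← Real.rpow_mul hX] at h2
    have e1 : (1/(Δ:ℝ)) * ((Δ:ℝ) * (m:ℝ)) = (m:ℝ) := by field_simp
    have e2 : (1/(m:ℝ)) * ((Δ:ℝ) * (m:ℝ)) = (Δ:ℝ) := by field_simp
    rw [e1, e2] at h2
    exact h2
  rw [Real.rpow_natCast, Real.rpow_natCast] at hB
  have hC2 : ((2:ℝ) ^ n * δ ^ C.card) ^ Δ = 2 ^ (n*Δ) * δ ^ (C.card * Δ) := by
    rw [mul_pow, ← pow_mul, ← pow_mul]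
  have hexp : m + 1 ≤ C.card * Δ := by
    have : m < Δ * C.card := hlt
    rw [mul_comm] at this
    omega
  have hpow : δ ^ (C.card * Δ) ≤ δ ^ (m+1) := pow_le_pow_of_le_one hδpos.le hδ1 hexp
  have hδm : (0:ℝ) < δ ^ m := pow_pos hδpos m
  have c1 : δ ^ m ≤ 2 ^ (n*Δ) * δ ^ (C.card * Δ) := by rw [← hC2]; exact hB
  have c2 : (2:ℝ) ^ (n*Δ) * δ ^ (C.card * Δ) ≤ 2 ^ (n*Δ) * δ ^ (m+1) :=
    mul_le_mul_of_nonneg_left hpow (by positivity)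
  have hlt1 : (2:ℝ) ^ (n*Δ) * δ < 1 := by
    rw [hδdef, ← div_eq_mul_inv, div_lt_one (by linarith)]
    linarith
  have c3 : (2:ℝ) ^ (n*Δ) * δ ^ (m+1) < δ ^ m := by
    have he : (2:ℝ) ^ (n*Δ) * δ ^ (m+1) = (2 ^ (n*Δ) * δ) * δ ^ m := by ring
    rw [he]
    calc (2 ^ (n*Δ) * δ) * δ ^ m < 1 * δ ^ m := mul_lt_mul_of_pos_right hlt1 hδm
      _ = δ ^ m := one_mul _
  linarith

end Aux3

theorem stmt4 {V : Type} [Fintype V] (H : SimpleGraph V)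
    (hH : H.Connected) (hdom : IsDominating H)
    (A : Set V)
    (hbip : ∀ v w, H.Adj v w → (v ∈ A ↔ w ∉ A))
    (hsize : Nat.card A ≤ Nat.card ↥(Aᶜ)) :
    (∀ v ∈ A, H.degree v = H.maxDegree) ∧
      H.edgeCard = H.maxDegree * Nat.card A := by
  classical
  haveI hne : Nonempty V := hH.nonempty
  set Afin := A.toFinset with hAfin
  have hcardA : Nat.card ↥A = Afin.card := by
    rw [Nat.card_coe_set_eq, Set.ncard_eq_toFinset_card']
  have hAcover : IsCover H Afin := by
    intro a b hab
    by_cases ha : a ∈ A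
    · exact Or.inl (Set.mem_toFinset.mpr ha)
    · right
      rw [hAfin, Set.mem_toFinset]
      by_contra hb
      exact ha ((hbip a b hab).mpr hb)
  by_cases hE : H.edgeCard = 0
  · have hcc : H.edgeSet.toFinset.card = 0 := hE
    have hnoadj : ∀ a b, ¬ H.Adj a b := by
      intro a b hab
      have h1 : s(a,b) ∈ H.edgeSet.toFinset := Set.mem_toFinset.mpr hab
      have h2 := Finset.card_pos.mpr ⟨_, h1⟩
      omega
    have hdeg0 : ∀ u, H.degree u = 0 := by
      intro u
      have hemp : H.neighborFinset u = ∅ :=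
        Finset.eq_empty_of_forall_notMem fun w hw =>
          hnoadj u w ((SimpleGraph.mem_neighborFinset H u w).mp hw)
      show (H.neighborFinset u).card = 0
      rw [hemp, Finset.card_empty]
    have hΔ0 : H.maxDegree = 0 := by
      obtain ⟨v, hv⟩ := H.exists_maximal_degree_vertex
      rw [hv, hdeg0]
    constructor
    · intro v _
      rw [hdeg0, hΔ0]
    · rw [hE, hΔ0, zero_mul]
  · have hΔ1 : 1 ≤ H.maxDegree := by
      obtain ⟨e, he⟩ := Finset.card_pos.mp (Nat.pos_of_ne_zero hE)
      induction e using Sym2.ind with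
      | _ a b =>
        rw [Set.mem_toFinset, SimpleGraph.mem_edgeSet] at he
        have h1 : 0 < H.degree a :=
          Finset.card_pos.mpr ⟨b, (SimpleGraph.mem_neighborFinset H a b).mpr he⟩
        exact le_trans h1 (H.degree_le_maxDegree a)
    obtain ⟨C, hCmem, hCmin⟩ := Finset.exists_min_image
      (Finset.univ.filter (fun T : Finset V => IsCover H T)) Finset.card
      ⟨Finset.univ, Finset.mem_filter.mpr ⟨Finset.mem_univ _,
        fun a _ _ => Or.inl (Finset.mem_univ a)⟩⟩
    have hCcov : IsCover H C := (Finset.mem_filter.mp hCmem).2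
    have hCmin' : ∀ T : Finset V, IsCover H T → C.card ≤ T.card := fun T hT =>
      hCmin T (Finset.mem_filter.mpr ⟨Finset.mem_univ _, hT⟩)
    have hkey : H.maxDegree * C.card ≤ H.edgeCard :=
      maxDegree_mul_le_edgeCard H hdom hne hΔ1 C hCmin'
    have hup : H.edgeCard ≤ H.maxDegree * C.card :=
      le_trans (edgeCard_le_sum_degree H C hCcov) (sum_degree_le H C)
    have heq : H.edgeCard = H.maxDegree * C.card := le_antisymm hup hkey
    have hsumC : ∑ e ∈ H.edgeSet.toFinset, (C.filter (fun v => v ∈ e)).card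
        ≤ H.edgeSet.toFinset.card := by
      rw [← sum_degree_eq_sum_card]
      calc ∑ v ∈ C, H.degree v ≤ H.maxDegree * C.card := sum_degree_le H C
        _ = H.edgeCard := heq.symm
        _ = H.edgeSet.toFinset.card := rfl
    have hone : ∀ e ∈ H.edgeSet.toFinset, (C.filter (fun v => v ∈ e)).card = 1 :=
      forall_eq_one_of_sum (fun e he => one_le_card_filter_of_cover hCcov he) hsumC
    have hnoC : ∀ a b, H.Adj a b → ¬(a ∈ C ∧ b ∈ C) := by
      rintro a b hab ⟨ha, hb⟩
      have hane : a ≠ b := H.ne_of_adj hab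
      have he : s(a,b) ∈ H.edgeSet.toFinset := Set.mem_toFinset.mpr hab
      have h1 := hone _ he
      have h2 : ({a, b} : Finset V) ⊆ C.filter (fun v => v ∈ s(a,b)) := by
        intro v hv
        rcases Finset.mem_insert.mp hv with rfl | hv
        · exact Finset.mem_filter.mpr ⟨ha, Sym2.mem_mk_left _ _⟩
        · rw [Finset.mem_singleton] at hv
          subst hv
          exact Finset.mem_filter.mpr ⟨hb, Sym2.mem_mk_right _ _⟩
      have h3 := Finset.card_le_card h2
      rw [Finset.card_insert_of_notMem (by simpa using hane), Finset.card_singleton] at h3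
      omega
    have hPadj : ∀ v w, H.Adj v w →
        (((v ∈ A ∧ v ∈ C) ∨ (v ∉ A ∧ v ∉ C)) ↔ ((w ∈ A ∧ w ∈ C) ∨ (w ∉ A ∧ w ∉ C))) := by
      intro v w hvw
      have hb1 := hbip v w hvw
      have hb2 := hbip w v hvw.symm
      have hcov := hCcov hvw
      have hno := hnoC v w hvw
      tauto
    have hPconst := iff_of_connected hH
      (fun v => (v ∈ A ∧ v ∈ C) ∨ (v ∉ A ∧ v ∉ C)) hPadj
    obtain ⟨u⟩ := hne
    have hcard : C.card = Afin.card := by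
      by_cases hu : (u ∈ A ∧ u ∈ C) ∨ (u ∉ A ∧ u ∉ C)
      · have hall : ∀ v, (v ∈ A ∧ v ∈ C) ∨ (v ∉ A ∧ v ∉ C) :=
          fun v => (hPconst u v).mp hu
        have hCA : C = Afin := by
          ext v
          rw [hAfin, Set.mem_toFinset]
          rcases hall v with ⟨h1, h2⟩ | ⟨h1, h2⟩
          · simp [h1, h2]
          · simp [h1, h2]
        rw [hCA]
      · have hall : ∀ v, ¬((v ∈ A ∧ v ∈ C) ∨ (v ∉ A ∧ v ∉ C)) :=
          fun v hv => hu ((hPconst u v).mpr hv)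
        have hcompl : C = Afinᶜ := by
          ext v
          have h := hall v
          rw [Finset.mem_compl, hAfin, Set.mem_toFinset]
          constructor
          · intro hvC hvA
            exact h (Or.inl ⟨hvA, hvC⟩)
          · intro hvA
            by_contra hvC
            exact h (Or.inr ⟨hvA, hvC⟩)
        have htot : Nat.card ↥A + Nat.card ↥(Aᶜ) = Fintype.card V := by
          rw [Nat.card_coe_set_eq, Nat.card_coe_set_eq,
            Set.ncard_add_ncard_compl, Nat.card_eq_fintype_card]
        have hccard : C.card = Fintype.card V - Afin.card := by
          rw [hcompl, Finset.card_compl]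
        have h3 := hCmin' Afin hAcover
        omega
    have hEq2 : H.edgeCard = H.maxDegree * Afin.card := by rw [heq, hcard]
    have honeA : ∀ e ∈ H.edgeSet.toFinset, (Afin.filter (fun v => v ∈ e)).card = 1 := by
      intro e he
      induction e using Sym2.ind with
      | _ a b =>
        rw [Set.mem_toFinset, SimpleGraph.mem_edgeSet] at he
        by_cases ha : a ∈ A
        · have hb : b ∉ A := (hbip a b he).mp ha
          have hfa : Afin.filter (fun v => v ∈ s(a,b)) = {a} := by
            ext v
            simp only [Finset.mem_filter, Finset.mem_singleton, Sym2.mem_iff, hAfin,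
              Set.mem_toFinset]
            constructor
            · rintro ⟨hv, rfl | rfl⟩
              · rfl
              · exact absurd hv hb
            · rintro rfl
              exact ⟨ha, Or.inl rfl⟩
          rw [hfa, Finset.card_singleton]
        · have hb : b ∈ A := by
            by_contra hb
            exact ha ((hbip a b he).mpr hb)
          have hane : a ≠ b := H.ne_of_adj he
          have hfb : Afin.filter (fun v => v ∈ s(a,b)) = {b} := by
            ext v
            simp only [Finset.mem_filter, Finset.mem_singleton, Sym2.mem_iff, hAfin,
              Set.mem_toFinset]
            constructor
            · rintro ⟨hv, rfl | rfl⟩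
              · exact absurd hv ha
              · rfl
            · rintro rfl
              exact ⟨hb, Or.inr rfl⟩
          rw [hfb, Finset.card_singleton]
    have hsumA : ∑ v ∈ Afin, H.degree v = H.edgeCard := by
      rw [sum_degree_eq_sum_card]
      calc ∑ e ∈ H.edgeSet.toFinset, (Afin.filter (fun v => v ∈ e)).card
          = ∑ _e ∈ H.edgeSet.toFinset, 1 := Finset.sum_congr rfl honeA
        _ = H.edgeSet.toFinset.card := by rw [Finset.sum_const, smul_eq_mul, mul_one]
        _ = H.edgeCard := rfl
    have hdegA : ∀ v ∈ Afin, H.degree v = H.maxDegree :=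
      forall_eq_of_sum_max (fun v _ => H.degree_le_maxDegree v)
        (by rw [hsumA, hEq2])
    refine ⟨fun v hv => hdegA v (Set.mem_toFinset.mpr hv), ?_⟩
    rw [hEq2, hcardA]
end

section
/- The 6-cycle C_6 is a dominating graph: for every subgraph H' of C_6 with at least one edge and every graphon W, t_{C_6}(W)^{1/6} ≥ t_{H'}(W)^{1/e(H')}. -/
open MeasureTheory
open scoped Classical

noncomputable section
namespace C6proof
open MeasureTheory ENNReal

def ν : Measure ℝ := volume.restrict (Set.Icc 0 1)

instance : IsProbabilityMeasure ν := ⟨by simp [ν]⟩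

lemma restrict_pi {ι : Type} [Fintype ι] :
    (Measure.pi fun _ : ι => (volume : Measure ℝ)).restrict (Set.univ.pi fun _ => Set.Icc (0:ℝ) 1)
      = Measure.pi fun _ : ι => ν := by
  refine (Measure.pi_eq fun s hs => ?_).symm
  rw [Measure.restrict_apply (MeasurableSet.univ_pi hs)]
  rw [← Set.pi_inter_distrib, Measure.pi_pi]
  simp [ν, Measure.restrict_apply (hs _)]

variable (W : Graphon)

lemma lift_meas {V : Type} [Fintype V] (e : Sym2 V) :
    Measurable fun x : V → ℝ =>
      Sym2.lift ⟨fun i j => W.toFun (x i) (x j), fun i j => W.symm (x i) (x j)⟩ e := by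
  induction e using Sym2.ind with
  | _ i j =>
    simp only [Sym2.lift_mk]
    exact Measurable.comp (g := Function.uncurry W.toFun)
      (f := fun x : V → ℝ => (x i, x j)) W.measurable'
      ((measurable_pi_apply i).prodMk (measurable_pi_apply j))

lemma lift_nonneg {V : Type} [Fintype V] (e : Sym2 V) (x : V → ℝ) :
    0 ≤ Sym2.lift ⟨fun i j => W.toFun (x i) (x j), fun i j => W.symm (x i) (x j)⟩ e := by
  induction e using Sym2.ind with
  | _ i j => simpa using W.nonneg _ _

lemma lift_le_one {V : Type} [Fintype V] (e : Sym2 V) (x : V → ℝ) :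
    Sym2.lift ⟨fun i j => W.toFun (x i) (x j), fun i j => W.symm (x i) (x j)⟩ e ≤ 1 := by
  induction e using Sym2.ind with
  | _ i j => simpa using W.le_one _ _

/-- ENNReal edge-product density over an arbitrary vertex type. -/
def LD (V : Type) [Fintype V] (J : Finset (Sym2 V)) : ℝ≥0∞ :=
  ∫⁻ x, (∏ e ∈ J,
    ENNReal.ofReal (Sym2.lift ⟨fun i j => W.toFun (x i) (x j), fun i j => W.symm (x i) (x j)⟩ e))
    ∂(Measure.pi fun _ : V => ν)

lemma subDensity_eq_LD {V : Type} [Fintype V] (J : Finset (Sym2 V)) :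
    subDensity J W = (LD W V J).toReal := by
  rw [subDensity, LD, ← restrict_pi]
  rw [integral_eq_lintegral_of_nonneg_ae]
  · congr 1
    refine lintegral_congr fun x => ?_
    exact ENNReal.ofReal_prod_of_nonneg fun e _ => lift_nonneg W e x
  · exact Filter.Eventually.of_forall fun x => Finset.prod_nonneg fun e _ => lift_nonneg W e x
  · exact (Finset.measurable_prod J fun e _ => lift_meas W e).aestronglyMeasurable

lemma LD_le_one {V : Type} [Fintype V] (J : Finset (Sym2 V)) : LD W V J ≤ 1 := by
  have h1 : (1 : ℝ≥0∞) = ∫⁻ _, (1:ℝ≥0∞) ∂(Measure.pi fun _ : V => ν) := by simp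
  rw [LD, h1]
  refine lintegral_mono fun x => ?_
  refine Finset.prod_le_one (fun e _ => zero_le) fun e _ => ?_
  simpa using ENNReal.ofReal_le_one.2 (lift_le_one W e x)
section Transfer
variable {V' V : Type} [Fintype V'] [Fintype V]

/-- Pull back a `lintegral` over a pi-measure along an injection of index types. -/
lemma lintegral_pi_comp_inj (f : V' → V) (hf : Function.Injective f)
    (Φ : (V' → ℝ) → ℝ≥0∞) (hΦ : Measurable Φ) :
    ∫⁻ x, Φ (x ∘ f) ∂(Measure.pi fun _ : V => ν)
      = ∫⁻ y, Φ y ∂(Measure.pi fun _ : V' => ν) := by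
  classical
  set C := {i : V // i ∉ Set.range f}
  set g : V' ⊕ C ≃ V :=
    (Equiv.sumCongr (Equiv.ofInjective f hf) (Equiv.refl C)).trans
      (Equiv.sumCompl (· ∈ Set.range f))
  have mp := measurePreserving_piCongrLeft (fun _ : V => ν) g
  have hg : Measurable fun x : V → ℝ => Φ (x ∘ f) :=
    hΦ.comp (measurable_pi_iff.2 fun w => measurable_pi_apply (f w))
  rw [← mp.lintegral_comp hg]
  have hrw : ∀ y : V' ⊕ C → ℝ,
      ((MeasurableEquiv.piCongrLeft (fun _ : V => ℝ) g) y) ∘ f = y ∘ Sum.inl := by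
    intro y
    funext w
    have : f w = g (Sum.inl w) := rfl
    rw [Function.comp_apply, this, MeasurableEquiv.coe_piCongrLeft,
      Equiv.piCongrLeft_apply_apply]
    rfl
  simp only [hrw]
  have mp2 := measurePreserving_sumPiEquivProdPi (fun _ : V' ⊕ C => ν)
  have hΨ : Measurable fun z : (V' → ℝ) × (C → ℝ) => Φ z.1 := hΦ.comp measurable_fst
  have := mp2.lintegral_comp (f := fun z : (V' → ℝ) × (C → ℝ) => Φ z.1) hΨ
  have heq : ∀ y : V' ⊕ C → ℝ,
      Φ ((MeasurableEquiv.sumPiEquivProdPi (fun _ : V' ⊕ C => ℝ)) y).1 = Φ (y ∘ Sum.inl) :=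
    fun y => rfl
  simp only [heq] at this
  rw [this, lintegral_prod _ hΨ.aemeasurable]
  simp [lintegral_const, measure_univ, mul_one]

end Transfer
section Iterate

lemma meas_cons {n : ℕ} (a : ℝ) :
    Measurable fun y : Fin n → ℝ => (Fin.cons a y : Fin (n+1) → ℝ) := by
  refine measurable_pi_iff.2 fun i => ?_
  refine Fin.cases ?_ ?_ i
  · simp only [Fin.cons_zero]; exact measurable_const
  · intro j; simp only [Fin.cons_succ]; exact measurable_pi_apply j

lemma peel {n : ℕ} (g : (Fin (n+1) → ℝ) → ℝ≥0∞) (hg : Measurable g) :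
    ∫⁻ x, g x ∂(Measure.pi fun _ : Fin (n+1) => ν)
      = ∫⁻ a, ∫⁻ y, g (Fin.cons a y) ∂(Measure.pi fun _ : Fin n => ν) ∂ν := by
  have mp := measurePreserving_piFinSuccAbove (fun _ : Fin (n+1) => ν) 0
  set e := MeasurableEquiv.piFinSuccAbove (fun _ : Fin (n+1) => ℝ) 0 with he
  have hsymm : ∀ (a : ℝ) (y : Fin n → ℝ), e.symm (a, y) = Fin.cons a y := by
    intro a y
    show (Fin.insertNthEquiv (fun _ => ℝ) 0) (a, y) = _
    rw [Fin.insertNthEquiv_zero]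
    rfl
  have hge : Measurable fun z : ℝ × (Fin n → ℝ) => g (e.symm z) := hg.comp e.symm.measurable
  rw [← (MeasurePreserving.symm e mp).lintegral_comp hg, lintegral_prod _ hge.aemeasurable]
  simp only [hsymm]

lemma lintegral_pi_zero (g : (Fin 0 → ℝ) → ℝ≥0∞) :
    ∫⁻ x, g x ∂(Measure.pi fun _ : Fin 0 => ν) = g ![] := by
  rw [Measure.pi_of_empty]
  rw [lintegral_dirac]
  exact congrArg g (Subsingleton.elim _ _)

lemma lintegral_pi_six (g : (Fin 6 → ℝ) → ℝ≥0∞) (hg : Measurable g) :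
    ∫⁻ x, g x ∂(Measure.pi fun _ : Fin 6 => ν)
      = ∫⁻ x0, ∫⁻ x1, ∫⁻ x2, ∫⁻ x3, ∫⁻ x4, ∫⁻ x5,
          g ![x0, x1, x2, x3, x4, x5] ∂ν ∂ν ∂ν ∂ν ∂ν ∂ν := by
  rw [peel g hg]
  refine lintegral_congr fun x0 => ?_
  rw [peel (fun y => g (Fin.cons x0 y)) (hg.comp (meas_cons x0))]
  refine lintegral_congr fun x1 => ?_
  rw [peel (fun y => g (Fin.cons x0 (Fin.cons x1 y)))
    ((hg.comp (meas_cons x0)).comp (meas_cons x1))]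
  refine lintegral_congr fun x2 => ?_
  rw [peel (fun y => g (Fin.cons x0 (Fin.cons x1 (Fin.cons x2 y))))
    (((hg.comp (meas_cons x0)).comp (meas_cons x1)).comp (meas_cons x2))]
  refine lintegral_congr fun x3 => ?_
  rw [peel (fun y => g (Fin.cons x0 (Fin.cons x1 (Fin.cons x2 (Fin.cons x3 y)))))
    ((((hg.comp (meas_cons x0)).comp (meas_cons x1)).comp (meas_cons x2)).comp (meas_cons x3))]
  refine lintegral_congr fun x4 => ?_
  rw [peel (fun y => g (Fin.cons x0 (Fin.cons x1 (Fin.cons x2 (Fin.cons x3 (Fin.cons x4 y))))))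
    (((((hg.comp (meas_cons x0)).comp (meas_cons x1)).comp (meas_cons x2)).comp
      (meas_cons x3)).comp (meas_cons x4))]
  refine lintegral_congr fun x5 => ?_
  rw [lintegral_pi_zero]
  exact congrArg g (by funext i; fin_cases i <;> rfl)

end Iterate
section Kernels

/-- A bundled symmetric measurable `[0,1]`-ish kernel with values in `ℝ≥0∞`, bounded by 1. -/
structure Ker where
  k : ℝ → ℝ → ℝ≥0∞
  meas : Measurable (Function.uncurry k)
  symm' : ∀ x y, k x y = k y x
  le_one' : ∀ x y, k x y ≤ 1

namespace Ker

lemma ne_top' (p : Ker) (x y : ℝ) : p.k x y ≠ ∞ :=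
  ne_top_of_le_ne_top one_ne_top (p.le_one' x y)

lemma meas2 (p : Ker) {α : Type*} [MeasurableSpace α] {u v : α → ℝ}
    (hu : Measurable u) (hv : Measurable v) : Measurable fun a => p.k (u a) (v a) :=
  p.meas.comp (hu.prodMk hv)

end Ker

/-- The constant-one kernel. -/
def oneK : Ker := ⟨fun _ _ => 1, measurable_const, fun _ _ => rfl, fun _ _ => le_rfl⟩

/-- The labelled 6-cycle integral. -/
def T6 (f : Fin 6 → Ker) : ℝ≥0∞ :=
  ∫⁻ x, (∏ i : Fin 6, (f i).k (x i) (x (i+1))) ∂(Measure.pi fun _ : Fin 6 => ν)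

lemma T6_meas_integrand (f : Fin 6 → Ker) :
    Measurable fun x : Fin 6 → ℝ => ∏ i : Fin 6, (f i).k (x i) (x (i+1)) :=
  Finset.measurable_prod _ fun i _ =>
    (f i).meas2 (measurable_pi_apply i) (measurable_pi_apply (i+1))

lemma T6_le_one (f : Fin 6 → Ker) : T6 f ≤ 1 := by
  have h : T6 f ≤ ∫⁻ _x, (1:ℝ≥0∞) ∂(Measure.pi fun _ : Fin 6 => ν) :=
    lintegral_mono fun x =>
      Finset.prod_le_one (fun i _ => zero_le) fun i _ => (f i).le_one' _ _
  simpa using h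

lemma T6_ne_top (f : Fin 6 → Ker) : T6 f ≠ ∞ :=
  ne_top_of_le_ne_top one_ne_top (T6_le_one f)

lemma T6_eq (a b c d e f : Ker) :
    T6 ![a,b,c,d,e,f] = ∫⁻ x0, ∫⁻ x1, ∫⁻ x2, ∫⁻ x3, ∫⁻ x4, ∫⁻ x5,
      a.k x0 x1 * b.k x1 x2 * c.k x2 x3 * d.k x3 x4 * e.k x4 x5 * f.k x5 x0
      ∂ν ∂ν ∂ν ∂ν ∂ν ∂ν := by
  rw [T6, lintegral_pi_six _ (T6_meas_integrand _)]
  refine lintegral_congr fun x0 => lintegral_congr fun x1 => lintegral_congr fun x2 =>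
    lintegral_congr fun x3 => lintegral_congr fun x4 => lintegral_congr fun x5 => ?_
  rw [Fin.prod_univ_six]; rfl

lemma T6_rot_gen (f : Fin 6 → Ker) : T6 (fun j => f (j - 1)) = T6 f := by
  set e : Fin 6 ≃ Fin 6 := (Equiv.addRight (1 : Fin 6)).symm with he
  have mp := measurePreserving_piCongrLeft (fun _ : Fin 6 => ν) e
  have hpcl : ∀ (y : Fin 6 → ℝ) (i : Fin 6),
      (MeasurableEquiv.piCongrLeft (fun _ : Fin 6 => ℝ) e) y i = y (i + 1) := by
    intro y i
    have h1 : e (i + 1) = i := by simp [he]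
    conv_lhs => rw [← h1]
    rw [MeasurableEquiv.coe_piCongrLeft, Equiv.piCongrLeft_apply_apply]
  rw [T6, T6, ← mp.lintegral_comp (T6_meas_integrand f)]
  refine lintegral_congr fun y => ?_
  simp only [hpcl]
  refine (Fintype.prod_equiv (Equiv.addRight (1 : Fin 6)) _ _ fun i => ?_).symm
  simp [Equiv.coe_addRight, add_sub_cancel_right]

lemma T6_rot (a b c d e f : Ker) : T6 ![a,b,c,d,e,f] = T6 ![b,c,d,e,f,a] := by
  have h := T6_rot_gen ![b,c,d,e,f,a]
  have h2 : (fun j : Fin 6 => (![b,c,d,e,f,a] : Fin 6 → Ker) (j - 1)) = ![a,b,c,d,e,f] := by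
    funext j; fin_cases j <;> rfl
  rw [h2] at h; exact h

/-- The three-step path kernel. -/
def Fh (p q r : Ker) (u v : ℝ) : ℝ≥0∞ :=
  ∫⁻ s, p.k u s * ∫⁻ t, q.k s t * r.k t v ∂ν ∂ν

lemma Fh_inner_meas (q r : Ker) {α : Type*} [MeasurableSpace α] {u v : α → ℝ}
    (hu : Measurable u) (hv : Measurable v) :
    Measurable fun a => ∫⁻ t, q.k (u a) t * r.k t (v a) ∂ν := by
  refine Measurable.lintegral_prod_right (f := fun a t => q.k (u a) t * r.k t (v a)) ?_
  exact ((q.meas2 (hu.comp measurable_fst) measurable_snd).mul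
    (r.meas2 measurable_snd (hv.comp measurable_fst)))

lemma Fh_meas (p q r : Ker) {α : Type*} [MeasurableSpace α] {u v : α → ℝ}
    (hu : Measurable u) (hv : Measurable v) :
    Measurable fun a => Fh p q r (u a) (v a) := by
  simp only [Fh]
  refine Measurable.lintegral_prod_right (f := fun a s => p.k (u a) s * ∫⁻ t, q.k s t * r.k t (v a) ∂ν) ?_
  refine (p.meas2 (hu.comp measurable_fst) measurable_snd).mul ?_
  exact Fh_inner_meas q r measurable_snd (hv.comp measurable_fst)

lemma Fh_inner_le_one (q r : Ker) (s v : ℝ) : (∫⁻ t, q.k s t * r.k t v ∂ν) ≤ 1 := by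
  have h : (∫⁻ t, q.k s t * r.k t v ∂ν) ≤ ∫⁻ _t, (1:ℝ≥0∞) ∂ν :=
    lintegral_mono fun t => mul_le_one' (q.le_one' _ _) (r.le_one' _ _)
  simpa using h

lemma Fh_le_one (p q r : Ker) (u v : ℝ) : Fh p q r u v ≤ 1 := by
  have h : Fh p q r u v ≤ ∫⁻ _s, (1:ℝ≥0∞) ∂ν :=
    lintegral_mono fun s => mul_le_one' (p.le_one' _ _) (Fh_inner_le_one q r s v)
  simpa using h

lemma Fh_ne_top (p q r : Ker) (u v : ℝ) : Fh p q r u v ≠ ∞ :=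
  ne_top_of_le_ne_top one_ne_top (Fh_le_one p q r u v)

lemma swap_lint (φ : ℝ → ℝ → ℝ≥0∞) (h : Measurable (Function.uncurry φ)) :
    ∫⁻ s, ∫⁻ t, φ s t ∂ν ∂ν = ∫⁻ t, ∫⁻ s, φ s t ∂ν ∂ν :=
  lintegral_lintegral_swap h.aemeasurable

lemma Fh_flip (p q r : Ker) (u v : ℝ) : Fh r q p v u = Fh p q r u v := by
  rw [Fh, Fh]
  have h1 : ∀ s : ℝ, r.k v s * (∫⁻ t, q.k s t * p.k t u ∂ν)
      = ∫⁻ t, r.k v s * (q.k s t * p.k t u) ∂ν :=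
    fun s => (lintegral_const_mul' (r.k v s) _ (r.ne_top' _ _)).symm
  rw [lintegral_congr h1]
  have hm : Measurable (Function.uncurry fun s t => r.k v s * (q.k s t * p.k t u)) :=
    (r.meas2 measurable_const measurable_fst).mul
      ((q.meas2 measurable_fst measurable_snd).mul (p.meas2 measurable_snd measurable_const))
  rw [swap_lint (fun s t => r.k v s * (q.k s t * p.k t u)) hm]
  refine lintegral_congr fun s => ?_
  rw [← lintegral_const_mul' (p.k u s) _ (p.ne_top' _ _)]
  refine lintegral_congr fun t => ?_
  rw [p.symm' u s, q.symm' s t, r.symm' t v]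
  ring

lemma T6_split (a b c d e f : Ker) :
    T6 ![a,b,c,d,e,f] = ∫⁻ x0, ∫⁻ x3, Fh a b c x0 x3 * Fh d e f x3 x0 ∂ν ∂ν := by
  rw [T6_eq]
  have step1 : ∀ x0 x1 x2 x3 : ℝ,
      (∫⁻ x4, ∫⁻ x5,
          a.k x0 x1 * b.k x1 x2 * c.k x2 x3 * d.k x3 x4 * e.k x4 x5 * f.k x5 x0 ∂ν ∂ν)
        = (a.k x0 x1 * (b.k x1 x2 * c.k x2 x3)) * Fh d e f x3 x0 := by
    intro x0 x1 x2 x3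
    have hA : a.k x0 x1 * (b.k x1 x2 * c.k x2 x3) ≠ ∞ :=
      ENNReal.mul_ne_top (a.ne_top' _ _) (ENNReal.mul_ne_top (b.ne_top' _ _) (c.ne_top' _ _))
    have inner5 : ∀ x4 : ℝ,
        (∫⁻ x5, a.k x0 x1 * b.k x1 x2 * c.k x2 x3 * d.k x3 x4 * e.k x4 x5 * f.k x5 x0 ∂ν)
          = (a.k x0 x1 * (b.k x1 x2 * c.k x2 x3)) * (d.k x3 x4 * ∫⁻ x5, e.k x4 x5 * f.k x5 x0 ∂ν) := by
      intro x4
      rw [← mul_assoc, ← lintegral_const_mul' (a.k x0 x1 * (b.k x1 x2 * c.k x2 x3) * d.k x3 x4) _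
        (ENNReal.mul_ne_top hA (d.ne_top' _ _))]
      exact lintegral_congr fun x5 => by ring
    rw [lintegral_congr inner5, lintegral_const_mul' _ _ hA]
    rfl
  simp only [step1]
  refine lintegral_congr fun x0 => ?_
  -- now: ∫x1∫x2∫x3 (a*(b*c))*Fh = ∫x3 Fh a b c x0 x3 * Fh d e f x3 x0
  have sw1 : ∀ x1 : ℝ,
      (∫⁻ x2, ∫⁻ x3, (a.k x0 x1 * (b.k x1 x2 * c.k x2 x3)) * Fh d e f x3 x0 ∂ν ∂ν)
        = ∫⁻ x3, ∫⁻ x2, (a.k x0 x1 * (b.k x1 x2 * c.k x2 x3)) * Fh d e f x3 x0 ∂ν ∂ν := by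
    intro x1
    refine swap_lint _ ?_
    refine (((a.meas2 measurable_const measurable_const).mul
      ((b.meas2 measurable_const measurable_fst).mul
        (c.meas2 measurable_fst measurable_snd))).mul ?_)
    exact Fh_meas d e f measurable_snd measurable_const
  simp only [sw1]
  rw [swap_lint _ (by
    refine Measurable.lintegral_prod_right
      (f := fun z : ℝ × ℝ => fun x2 =>
        (a.k x0 z.1 * (b.k z.1 x2 * c.k x2 z.2)) * Fh d e f z.2 x0) ?_
    refine (((a.meas2 measurable_const (measurable_fst.comp measurable_fst)).mul
      ((b.meas2 (measurable_fst.comp measurable_fst) measurable_snd).mul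
        (c.meas2 measurable_snd (measurable_snd.comp measurable_fst)))).mul ?_)
    exact Fh_meas d e f (measurable_snd.comp measurable_fst) measurable_const)]
  refine lintegral_congr fun x3 => ?_
  -- now: ∫x1∫x2 (a*(b*c))*FhD = Fh a b c x0 x3 * Fh d e f x3 x0
  have hpull : ∀ x1 : ℝ,
      (∫⁻ x2, (a.k x0 x1 * (b.k x1 x2 * c.k x2 x3)) * Fh d e f x3 x0 ∂ν)
        = (a.k x0 x1 * ∫⁻ x2, b.k x1 x2 * c.k x2 x3 ∂ν) * Fh d e f x3 x0 := by
    intro x1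
    rw [mul_assoc, mul_comm (∫⁻ x2, b.k x1 x2 * c.k x2 x3 ∂ν), ← mul_assoc]
    rw [← lintegral_const_mul' (a.k x0 x1 * Fh d e f x3 x0) _
      (ENNReal.mul_ne_top (a.ne_top' _ _) (Fh_ne_top _ _ _ _ _))]
    exact lintegral_congr fun x2 => by ring
  simp only [hpull]
  exact lintegral_mul_const' (Fh d e f x3 x0) _ (Fh_ne_top _ _ _ _ _)

end Kernels
section CS

lemma T6_cs (a b c d e f : Ker) :
    T6 ![a,b,c,d,e,f] ^ 2 ≤ T6 ![a,b,c,c,b,a] * T6 ![d,e,f,f,e,d] := by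
  have hmF : Measurable fun z : ℝ × ℝ => Fh a b c z.1 z.2 :=
    Fh_meas a b c measurable_fst measurable_snd
  have hmG : Measurable fun z : ℝ × ℝ => Fh d e f z.2 z.1 :=
    Fh_meas d e f measurable_snd measurable_fst
  have hT : T6 ![a,b,c,d,e,f]
      = ∫⁻ z : ℝ × ℝ, Fh a b c z.1 z.2 * Fh d e f z.2 z.1 ∂(ν.prod ν) := by
    rw [T6_split, lintegral_prod (fun z : ℝ × ℝ => Fh a b c z.1 z.2 * Fh d e f z.2 z.1) (hmF.mul hmG).aemeasurable]
  have hF2 : T6 ![a,b,c,c,b,a] = ∫⁻ z : ℝ × ℝ, (Fh a b c z.1 z.2) ^ 2 ∂(ν.prod ν) := by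
    rw [T6_split, lintegral_prod _ (hmF.pow_const 2).aemeasurable]
    refine lintegral_congr fun x0 => lintegral_congr fun x3 => ?_
    rw [Fh_flip a b c x0 x3, sq]
  have hG2 : T6 ![d,e,f,f,e,d] = ∫⁻ z : ℝ × ℝ, (Fh d e f z.2 z.1) ^ 2 ∂(ν.prod ν) := by
    rw [T6_split, lintegral_prod _ (hmG.pow_const 2).aemeasurable]
    have hsw : (∫⁻ x0, ∫⁻ x3, (Fh d e f x3 x0) ^ 2 ∂ν ∂ν)
        = ∫⁻ x3, ∫⁻ x0, (Fh d e f x3 x0) ^ 2 ∂ν ∂ν :=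
      swap_lint (fun x0 x3 => (Fh d e f x3 x0) ^ 2)
        ((Fh_meas d e f measurable_snd measurable_fst).pow_const 2)
    rw [hsw]
    refine lintegral_congr fun x3 => lintegral_congr fun x0 => ?_
    rw [Fh_flip d e f x3 x0, sq]
  have hconj : Real.HolderConjugate 2 2 := by constructor <;> norm_num
  have H := ENNReal.lintegral_mul_le_Lp_mul_Lq (ν.prod ν) hconj
    hmF.aemeasurable hmG.aemeasurable
  simp only [Pi.mul_apply] at H
  rw [← hT] at H
  have h2 : ((2:ℕ) : ℝ) = (2 : ℝ) := by norm_num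
  have hr : ∀ x : ℝ≥0∞, x ^ (2:ℝ) = x ^ (2:ℕ) := fun x => by
    rw [← h2, ENNReal.rpow_natCast]
  simp only [hr] at H
  rw [← hF2, ← hG2] at H
  calc T6 ![a,b,c,d,e,f] ^ 2
      ≤ ((T6 ![a,b,c,c,b,a]) ^ ((1:ℝ)/2) * (T6 ![d,e,f,f,e,d]) ^ ((1:ℝ)/2)) ^ 2 :=
        pow_le_pow_left' H 2
    _ = T6 ![a,b,c,c,b,a] * T6 ![d,e,f,f,e,d] := by
        rw [mul_pow]
        rw [← ENNReal.rpow_natCast ((T6 ![a,b,c,c,b,a]) ^ ((1:ℝ)/2)) 2,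
          ← ENNReal.rpow_natCast ((T6 ![d,e,f,f,e,d]) ^ ((1:ℝ)/2)) 2,
          ← ENNReal.rpow_mul, ← ENNReal.rpow_mul]
        norm_num

/-- Pure labelled cycle density. -/
def P (u : Ker) : ℝ≥0∞ := T6 ![u,u,u,u,u,u]

lemma sq_reflect {x y : ℝ≥0∞} (h : x ^ 2 ≤ y ^ 2) : x ≤ y := by
  by_contra hc
  push_neg at hc
  exact absurd h (not_le.2 (ENNReal.pow_lt_pow_left two_ne_zero hc))

lemma X3 (u v : Ker) : T6 ![u,v,v,v,v,u] ^ 3 ≤ P u * P v ^ 2 := by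
  have hx2 : T6 ![u,v,v,v,v,u] ^ 2 ≤ P v * T6 ![v,u,u,u,u,v] := by
    rw [T6_rot u v v v v u]; exact T6_cs v v v v u u
  have hy2 : T6 ![v,u,u,u,u,v] ^ 2 ≤ P u * T6 ![u,v,v,v,v,u] := by
    rw [T6_rot v u u u u v]; exact T6_cs u u u u v v
  by_cases h0 : T6 ![u,v,v,v,v,u] = 0
  · rw [h0]; simp
  · refine (ENNReal.mul_le_mul_iff_left h0 (T6_ne_top _)).1 ?_
    calc T6 ![u,v,v,v,v,u] ^ 3 * T6 ![u,v,v,v,v,u] = (T6 ![u,v,v,v,v,u] ^ 2) ^ 2 := by ring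
      _ ≤ (P v * T6 ![v,u,u,u,u,v]) ^ 2 := pow_le_pow_left' hx2 2
      _ = P v ^ 2 * T6 ![v,u,u,u,u,v] ^ 2 := by ring
      _ ≤ P v ^ 2 * (P u * T6 ![u,v,v,v,v,u]) := mul_le_mul_right hy2 _
      _ = P u * P v ^ 2 * T6 ![u,v,v,v,v,u] := by ring

lemma M6 (a b c : Ker) : T6 ![a,b,c,c,b,a] ^ 6 ≤ (P a * P b * P c) ^ 2 := by
  have h1 : T6 ![a,b,c,c,b,a] ^ 2 ≤ T6 ![b,c,c,c,c,b] * T6 ![b,a,a,a,a,b] := by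
    rw [T6_rot a b c c b a]; exact T6_cs b c c b a a
  calc T6 ![a,b,c,c,b,a] ^ 6 = (T6 ![a,b,c,c,b,a] ^ 2) ^ 3 := by ring
    _ ≤ (T6 ![b,c,c,c,c,b] * T6 ![b,a,a,a,a,b]) ^ 3 := pow_le_pow_left' h1 3
    _ = T6 ![b,c,c,c,c,b] ^ 3 * T6 ![b,a,a,a,a,b] ^ 3 := by ring
    _ ≤ (P b * P c ^ 2) * (P b * P a ^ 2) := mul_le_mul' (X3 b c) (X3 b a)
    _ = (P a * P b * P c) ^ 2 := by ring

lemma T6_pow_six (a b c d e f : Ker) :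
    T6 ![a,b,c,d,e,f] ^ 6 ≤ P a * P b * P c * P d * P e * P f := by
  refine sq_reflect ?_
  calc (T6 ![a,b,c,d,e,f] ^ 6) ^ 2 = (T6 ![a,b,c,d,e,f] ^ 2) ^ 6 := by ring
    _ ≤ (T6 ![a,b,c,c,b,a] * T6 ![d,e,f,f,e,d]) ^ 6 :=
        pow_le_pow_left' (T6_cs a b c d e f) 6
    _ = T6 ![a,b,c,c,b,a] ^ 6 * T6 ![d,e,f,f,e,d] ^ 6 := by ring
    _ ≤ (P a * P b * P c) ^ 2 * (P d * P e * P f) ^ 2 := mul_le_mul' (M6 a b c) (M6 d e f)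
    _ = (P a * P b * P c * P d * P e * P f) ^ 2 := by ring

lemma P_one : P oneK = 1 := by
  rw [P, T6]
  have h : ∀ x : Fin 6 → ℝ,
      (∏ i : Fin 6, ((![oneK,oneK,oneK,oneK,oneK,oneK] : Fin 6 → Ker) i).k (x i) (x (i+1)))
        = 1 := by
    intro x
    refine Finset.prod_eq_one fun i _ => ?_
    fin_cases i <;> rfl
  simp only [h]
  simp

end CS
section Comb

/-- The graphon kernel. -/
def WK (W : Graphon) : Ker where
  k := fun x y => ENNReal.ofReal (W.toFun x y)
  meas := by
    have : Measurable fun p : ℝ × ℝ => ENNReal.ofReal (Function.uncurry W.toFun p) :=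
      W.measurable'.ennreal_ofReal
    exact this
  symm' := fun x y => by
    show ENNReal.ofReal (W.toFun x y) = ENNReal.ofReal (W.toFun y x)
    rw [W.symm]
  le_one' := fun x y => by simpa using ENNReal.ofReal_le_one.2 (W.le_one x y)

/-- The edges of the 6-cycle. -/
def edg : Fin 6 → Sym2 (Fin 6) := fun i => s(i, i+1)

lemma edg_inj : Function.Injective edg := by decide

lemma edge_finset_eq (inst : Fintype ((SimpleGraph.cycleGraph 6).edgeSet : Set (Sym2 (Fin 6)))) :
    @Set.toFinset _ _ inst = Finset.univ.image edg := by
  ext e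
  rw [Set.mem_toFinset]
  induction e using Sym2.ind with
  | _ a b =>
    rw [SimpleGraph.mem_edgeSet]
    simp only [Finset.mem_image, Finset.mem_univ, true_and, edg]
    revert a b
    decide

lemma edgeCard_C6 : (SimpleGraph.cycleGraph 6).edgeCard = 6 := by
  rw [SimpleGraph.edgeCard, edge_finset_eq,
    Finset.card_image_of_injective _ edg_inj, Finset.card_univ, Fintype.card_fin]


/-- Kernel labels from an edge subset of the cycle. -/
def fS (W : Graphon) (S : Finset (Fin 6)) : Fin 6 → Ker :=
  fun i => if i ∈ S then WK W else oneK

lemma LD_eq_T6 (W : Graphon) (S : Finset (Fin 6)) :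
    LD W (Fin 6) (S.image edg) = T6 (fS W S) := by
  rw [LD, T6]
  refine lintegral_congr fun x => ?_
  rw [Finset.prod_image (fun i _ j _ h => edg_inj h)]
  have hterm : ∀ i : Fin 6,
      ENNReal.ofReal (Sym2.lift ⟨fun i j => W.toFun (x i) (x j),
        fun i j => W.symm (x i) (x j)⟩ (edg i)) = (WK W).k (x i) (x (i+1)) := by
    intro i
    rw [edg, Sym2.lift_mk]
    rfl
  rw [Finset.prod_congr rfl fun i _ => hterm i]
  have hsplit : ∀ i : Fin 6, (fS W S i).k (x i) (x (i+1))
      = if i ∈ S then (WK W).k (x i) (x (i+1)) else 1 := by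
    intro i
    rw [fS, apply_ite (fun K : Ker => K.k (x i) (x (i+1)))]
    rfl
  rw [Finset.prod_congr rfl fun i (_ : i ∈ Finset.univ) => hsplit i]
  rw [Finset.prod_ite_mem, Finset.univ_inter]

lemma lift_map_eq (W : Graphon) {V' V : Type} (f : V' → V) (x : V → ℝ) (e : Sym2 V') :
    Sym2.lift ⟨fun i j => W.toFun (x i) (x j), fun i j => W.symm (x i) (x j)⟩ (Sym2.map f e)
      = Sym2.lift ⟨fun i j => W.toFun ((x ∘ f) i) ((x ∘ f) j),
          fun i j => W.symm ((x ∘ f) i) ((x ∘ f) j)⟩ e := by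
  induction e using Sym2.ind with
  | _ a b => rw [Sym2.map_pair_eq, Sym2.lift_mk, Sym2.lift_mk]; rfl

lemma LD_image (W : Graphon) {V' V : Type} [Fintype V'] [Fintype V]
    (f : V' → V) (hf : Function.Injective f) (J' : Finset (Sym2 V')) :
    LD W V (J'.image (Sym2.map f)) = LD W V' J' := by
  classical
  set Φ : (V' → ℝ) → ℝ≥0∞ := fun y => ∏ e ∈ J',
    ENNReal.ofReal (Sym2.lift ⟨fun i j => W.toFun (y i) (y j),
      fun i j => W.symm (y i) (y j)⟩ e) with hΦdef
  have hΦ : Measurable Φ :=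
    Finset.measurable_prod _ fun e _ => (lift_meas W e).ennreal_ofReal
  have hpt : ∀ x : V → ℝ,
      (∏ e ∈ J'.image (Sym2.map f),
        ENNReal.ofReal (Sym2.lift ⟨fun i j => W.toFun (x i) (x j),
          fun i j => W.symm (x i) (x j)⟩ e)) = Φ (x ∘ f) := by
    intro x
    rw [Finset.prod_image (fun i _ j _ h => Sym2.map.injective hf h)]
    exact Finset.prod_congr rfl fun e _ => by rw [lift_map_eq]
  rw [LD, lintegral_congr hpt, lintegral_pi_comp_inj f hf Φ hΦ]
  rfl

lemma fS_univ_eq (W : Graphon) : T6 (fS W Finset.univ) = P (WK W) := by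
  rw [P]
  congr 1
  funext i
  fin_cases i <;> rfl

lemma prod_P_fS (W : Graphon) (S : Finset (Fin 6)) :
    (∏ i : Fin 6, P (fS W S i)) = P (WK W) ^ S.card := by
  have h : ∀ i : Fin 6, P (fS W S i) = if i ∈ S then P (WK W) else 1 := by
    intro i
    rw [fS, apply_ite P]
    simp [P_one]
  rw [Finset.prod_congr rfl fun i _ => h i, Finset.prod_ite_mem, Finset.univ_inter,
    Finset.prod_const]

lemma LD_pow_six (W : Graphon) (J : Finset (Sym2 (Fin 6)))
    (hJ : J ⊆ Finset.univ.image edg) :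
    LD W (Fin 6) J ^ 6 ≤ LD W (Fin 6) (Finset.univ.image edg) ^ J.card := by
  classical
  set S : Finset (Fin 6) := Finset.univ.filter (fun i => edg i ∈ J) with hS
  have hJS : J = S.image edg := by
    ext e
    constructor
    · intro he
      obtain ⟨i, _, hi⟩ := Finset.mem_image.1 (hJ he)
      exact Finset.mem_image.2 ⟨i, Finset.mem_filter.2 ⟨Finset.mem_univ _, hi ▸ he⟩, hi⟩
    · intro he
      obtain ⟨i, hi, hie⟩ := Finset.mem_image.1 he
      exact hie ▸ (Finset.mem_filter.1 hi).2
  have hcard : J.card = S.card := by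
    rw [hJS, Finset.card_image_of_injective _ edg_inj]
  rw [hJS, LD_eq_T6, Finset.card_image_of_injective _ edg_inj]
  have hfs : fS W S = ![fS W S 0, fS W S 1, fS W S 2, fS W S 3, fS W S 4, fS W S 5] := by
    funext i; fin_cases i <;> rfl
  have key : T6 (fS W S) ^ 6 ≤ ∏ i : Fin 6, P (fS W S i) := by
    rw [hfs, Fin.prod_univ_six]
    exact T6_pow_six _ _ _ _ _ _
  have hfull : LD W (Fin 6) (Finset.univ.image edg) = P (WK W) := by
    rw [← fS_univ_eq W, ← LD_eq_T6 W Finset.univ]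
  rw [hfull]
  calc T6 (fS W S) ^ 6 ≤ ∏ i : Fin 6, P (fS W S i) := key
    _ = P (WK W) ^ S.card := prod_P_fS W S

end Comb
lemma mem_image_edg_iff (e : Sym2 (Fin 6)) :
    e ∈ Finset.univ.image edg ↔ e ∈ (SimpleGraph.cycleGraph 6).edgeSet := by
  rw [← edge_finset_eq inferInstance, Set.mem_toFinset]

lemma homDensity_eq_subDensity {V : Type} [Fintype V] (H : SimpleGraph V) (W : Graphon) :
    homDensity H W = subDensity H.edgeSet.toFinset W := rfl

end C6proof

theorem stmt15 : IsDominating (SimpleGraph.cycleGraph 6) := by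
  classical
  intro V' instV' H' hsub hcard W
  obtain ⟨f, hf⟩ := hsub
  set E' : Finset (Sym2 V') := H'.edgeSet.toFinset with hE'
  set J : Finset (Sym2 (Fin 6)) := E'.image (Sym2.map f) with hJdef
  have hJsub : J ⊆ Finset.univ.image C6proof.edg := by
    intro e he
    obtain ⟨e', he', hmap⟩ := Finset.mem_image.1 he
    rw [C6proof.mem_image_edg_iff]
    subst hmap
    induction e' using Sym2.ind with
    | _ a b =>
      rw [Sym2.map_pair_eq, SimpleGraph.mem_edgeSet]
      exact f.map_adj (by simpa using Set.mem_toFinset.1 he')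
  have hcardJ : J.card = H'.edgeCard :=
    Finset.card_image_of_injective _ (Sym2.map.injective hf)
  have hH' : homDensity H' W = (C6proof.LD W (Fin 6) J).toReal := by
    rw [C6proof.homDensity_eq_subDensity, C6proof.subDensity_eq_LD,
      ← C6proof.LD_image W f hf E']
    refine congrArg ENNReal.toReal (congrArg _ ?_)
    ext e
    rw [hJdef]
    simp [Finset.mem_image]
  have hC6 : homDensity (SimpleGraph.cycleGraph 6) W
      = (C6proof.LD W (Fin 6) (Finset.univ.image C6proof.edg)).toReal := by
    rw [C6proof.homDensity_eq_subDensity, C6proof.subDensity_eq_LD,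
      C6proof.edge_finset_eq]
  set x := C6proof.LD W (Fin 6) J with hxdef
  set c := C6proof.LD W (Fin 6) (Finset.univ.image C6proof.edg) with hcdef
  have hxc6 : x ^ 6 ≤ c ^ H'.edgeCard := by
    rw [← hcardJ]; exact C6proof.LD_pow_six W J hJsub
  have hcne : c ≠ ⊤ := ne_top_of_le_ne_top ENNReal.one_ne_top (C6proof.LD_le_one W _)
  have hxne : x ≠ ⊤ := ne_top_of_le_ne_top ENNReal.one_ne_top (C6proof.LD_le_one W _)
  set k : ℕ := H'.edgeCard
  have hk1 : 1 ≤ k := hcard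
  have hk0 : (0:ℝ) < (k:ℝ) := by exact_mod_cast hk1
  have hxr : x.toReal ^ (6:ℕ) ≤ c.toReal ^ k := by
    rw [← ENNReal.toReal_pow, ← ENNReal.toReal_pow]
    exact ENNReal.toReal_mono (ENNReal.pow_ne_top hcne) hxc6
  have hx0 : (0:ℝ) ≤ x.toReal := ENNReal.toReal_nonneg
  have hc0 : (0:ℝ) ≤ c.toReal := ENNReal.toReal_nonneg
  rw [hH', hC6, C6proof.edgeCard_C6]
  show x.toReal ^ ((1:ℝ)/(k:ℝ)) ≤ c.toReal ^ ((1:ℝ)/((6:ℕ):ℝ))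
  have h6 : ((6:ℕ):ℝ) = (6:ℝ) := by norm_num
  calc x.toReal ^ ((1:ℝ)/(k:ℝ))
      = (x.toReal ^ ((6:ℕ):ℝ)) ^ ((1:ℝ)/(6*(k:ℝ))) := by
        rw [← Real.rpow_mul hx0]
        congr 1
        rw [h6]
        field_simp
    _ = (x.toReal ^ (6:ℕ)) ^ ((1:ℝ)/(6*(k:ℝ))) := by rw [Real.rpow_natCast]
    _ ≤ (c.toReal ^ k) ^ ((1:ℝ)/(6*(k:ℝ))) := by
        refine Real.rpow_le_rpow (by positivity) hxr (by positivity)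
    _ = (c.toReal ^ ((k:ℕ):ℝ)) ^ ((1:ℝ)/(6*(k:ℝ))) := by rw [Real.rpow_natCast]
    _ = c.toReal ^ ((1:ℝ)/((6:ℕ):ℝ)) := by
        rw [← Real.rpow_mul hc0, h6]
        congr 1
        field_simp
end
end
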